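/- For all real numbers β and γ and every ε > 0, there exist integers a, b, c, d with b ≠ 0, c ≠ 0, d ≠ 0 such that a·d − b·c = 1, |a/b − γ| < ε, |c/d − γ| < ε, |a/c − β| < ε, and |b/d − β| < ε. -/

import Mathlib

set_option maxHeartbeats 1000000


lemma exists_coprime_approx (x : ℝ) (N : ℤ) :
    ∃ p q : ℤ, N ≤ q ∧ IsCoprime p q ∧ |(p:ℝ) - x * q| ≤ 2 := by
  obtain ⟨P, hPge, hP⟩ := Nat.exists_infinite_primes (max N.toNat 2)
  have hq2 : (2:ℤ) ≤ (P:ℤ) := by exact_mod_cast le_trans (le_max_right _ _) hPge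
  have hNq : N ≤ (P:ℤ) := by
    have : N.toNat ≤ P := le_trans (le_max_left _ _) hPge
    exact le_trans (Int.self_le_toNat N) (by exact_mod_cast this)
  have hqprime : Prime ((P:ℤ)) := Nat.prime_iff_prime_int.mp hP
  set q : ℤ := (P:ℤ) with hqdef
  set p₀ : ℤ := ⌊x * (q:ℝ)⌋ with hp₀
  have h₀ : |(p₀:ℝ) - x * q| ≤ 1 := by
    rw [abs_le]
    constructor
    · have := Int.lt_floor_add_one (x * (q:ℝ)); linarith
    · have := Int.floor_le (x * (q:ℝ)); linarith
  by_cases hdvd : q ∣ p₀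
  · refine ⟨p₀ + 1, q, hNq, ?_, ?_⟩
    · have hnd : ¬ q ∣ (p₀ + 1) := by
        intro h
        have : q ∣ 1 := (dvd_add_right hdvd).mp h
        have := Int.le_of_dvd one_pos this
        omega
      exact ((hqprime.coprime_iff_not_dvd).mpr hnd).symm
    · have : |((p₀:ℝ) + 1) - x * q| ≤ |(p₀:ℝ) - x*q| + 1 := by
        calc |((p₀:ℝ) + 1) - x * q| = |((p₀:ℝ) - x*q) + 1| := by ring_nf
        _ ≤ |(p₀:ℝ) - x*q| + |(1:ℝ)| := abs_add_le _ _
        _ = |(p₀:ℝ) - x*q| + 1 := by norm_num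
      push_cast
      linarith
  · exact ⟨p₀, q, hNq, ((hqprime.coprime_iff_not_dvd).mpr hdvd).symm, le_trans h₀ one_le_two⟩

lemma exists_bezout_row (p q N : ℤ) (hq : 1 ≤ q) (h : IsCoprime p q) :
    ∃ p₀ q₀ : ℤ, p * q₀ - q * p₀ = 1 ∧ N ≤ q₀ := by
  obtain ⟨u, v, huv⟩ := h
  set t : ℤ := |N| + |u| with ht
  refine ⟨-v + t * p, u + t * q, by linear_combination huv, ?_⟩
  have h1 : t ≤ t * q := le_mul_of_one_le_right (by positivity) hq
  have h2 := le_abs_self N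
  have h3 := neg_abs_le u
  linarith

lemma div_err {X Y t ε : ℝ} (hY : Y ≠ 0) (h : |X - t*Y| < ε * |Y|) : |X/Y - t| < ε := by
  have hY' : 0 < |Y| := abs_pos.mpr hY
  have hXY : X/Y - t = (X - t*Y)/Y := by
    rw [sub_div, mul_div_assoc, div_self hY, mul_one]
  rw [hXY, abs_div]
  exact (div_lt_iff₀ hY').mpr h

lemma est1 {δ q q₀ n n' : ℝ} (h10 : 10 < δ * q) (hq₀ : 1 ≤ q₀) (hn : 1 ≤ n)
    (hn' : 1 ≤ n') (hq : 1 ≤ q) :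
    n * q * 2 + n' * (2 * q₀ + 1) < (δ/2) * (n * q + n' * q₀) * q := by
  nlinarith [mul_nonneg (by linarith : (0:ℝ) ≤ δ*q - 10) (by nlinarith : (0:ℝ) ≤ n*q),
    mul_nonneg (by linarith : (0:ℝ) ≤ δ*q - 10) (by nlinarith : (0:ℝ) ≤ n'*q₀),
    mul_nonneg (by linarith : (0:ℝ) ≤ n') (by linarith : (0:ℝ) ≤ q₀ - 1),
    mul_pos (by linarith : (0:ℝ) < n) (by linarith : (0:ℝ) < q),
    mul_pos (by linarith : (0:ℝ) < n') (by linarith : (0:ℝ) < q₀)]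

lemma est2 {δ q q₀ n n' : ℝ} (h10 : 10 < δ * n) (hq₀ : 1 ≤ q₀) (hn : 1 ≤ n)
    (hn' : 1 ≤ n') (hq : 1 ≤ q) :
    n * q * 2 + q₀ * (2 * n' + 1) < (δ/2) * (n * q + n' * q₀) * n := by
  nlinarith [mul_nonneg (by linarith : (0:ℝ) ≤ δ*n - 10) (by nlinarith : (0:ℝ) ≤ n*q),
    mul_nonneg (by linarith : (0:ℝ) ≤ δ*n - 10) (by nlinarith : (0:ℝ) ≤ n'*q₀),
    mul_nonneg (by linarith : (0:ℝ) ≤ q₀) (by linarith : (0:ℝ) ≤ n' - 1),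
    mul_pos (by linarith : (0:ℝ) < n) (by linarith : (0:ℝ) < q),
    mul_pos (by linarith : (0:ℝ) < n') (by linarith : (0:ℝ) < q₀)]

lemma est3S1 {ε B q n : ℝ} (hεq : 10 < ε * q) (hBn : 10 < B * n) (hn : 1 ≤ n) (hq : 1 ≤ q) :
    (B*n+2) * 2 * (n*q) < (ε * B / 2) * (n*q) * (n*q) := by
  nlinarith [mul_nonneg (mul_nonneg (by linarith : (0:ℝ) ≤ ε*q - 10) (by linarith : (0:ℝ) ≤ B*n)) (by nlinarith : (0:ℝ) ≤ n*q),
    mul_nonneg (by linarith : (0:ℝ) ≤ B*n - 10) (by nlinarith : (0:ℝ) ≤ n*q),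
    mul_pos (by linarith : (0:ℝ) < n) (by linarith : (0:ℝ) < q)]

lemma est3S2 {ε B q q₀ n n' : ℝ} (hεq : 10 < ε * q) (hBn : 10 < B * n)
    (hq₀ : 1 ≤ q₀) (hn : 1 ≤ n) (hn' : 1 ≤ n') (hq : 1 ≤ q) :
    ((B*n+2)*n'+1) * (2*q₀+1) ≤ (ε * B / 2) * (n'*q₀) * (n*q) := by
  nlinarith [mul_nonneg (mul_nonneg (by linarith : (0:ℝ) ≤ ε*q - 10) (by linarith : (0:ℝ) ≤ B*n)) (by nlinarith : (0:ℝ) ≤ n'*q₀),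
    mul_nonneg (by linarith : (0:ℝ) ≤ B*n - 10) (by nlinarith : (0:ℝ) ≤ n'*q₀),
    mul_nonneg (mul_nonneg (by linarith : (0:ℝ) ≤ B*n) (by linarith : (0:ℝ) ≤ n')) (by linarith : (0:ℝ) ≤ q₀ - 1),
    mul_nonneg (by linarith : (0:ℝ) ≤ n' - 1) (by linarith : (0:ℝ) ≤ q₀ - 1),
    mul_pos (by linarith : (0:ℝ) < n') (by linarith : (0:ℝ) < q₀)]

lemma est4S1 {ε G q n : ℝ} (hεn : 10 < ε * n) (hGq : 10 < G * q) (hn : 1 ≤ n) (hq : 1 ≤ q) :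
    2 * (G*q+2) * (n*q) < (ε * G / 2) * (n*q) * (n*q) := by
  nlinarith [mul_nonneg (mul_nonneg (by linarith : (0:ℝ) ≤ ε*n - 10) (by linarith : (0:ℝ) ≤ G*q)) (by nlinarith : (0:ℝ) ≤ n*q),
    mul_nonneg (by linarith : (0:ℝ) ≤ G*q - 10) (by nlinarith : (0:ℝ) ≤ n*q),
    mul_pos (by linarith : (0:ℝ) < n) (by linarith : (0:ℝ) < q)]

lemma est4S2 {ε G q q₀ n n' : ℝ} (hεn : 10 < ε * n) (hGq : 10 < G * q)
    (hq₀ : 1 ≤ q₀) (hn : 1 ≤ n) (hn' : 1 ≤ n') (hq : 1 ≤ q) :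
    (2*n'+1) * ((G*q+2)*q₀+1) ≤ (ε * G / 2) * (n'*q₀) * (n*q) := by
  nlinarith [mul_nonneg (mul_nonneg (by linarith : (0:ℝ) ≤ ε*n - 10) (by linarith : (0:ℝ) ≤ G*q)) (by nlinarith : (0:ℝ) ≤ n'*q₀),
    mul_nonneg (by linarith : (0:ℝ) ≤ G*q - 10) (by nlinarith : (0:ℝ) ≤ n'*q₀),
    mul_nonneg (mul_nonneg (by linarith : (0:ℝ) ≤ G*q) (by linarith : (0:ℝ) ≤ q₀)) (by linarith : (0:ℝ) ≤ n' - 1),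
    mul_nonneg (by linarith : (0:ℝ) ≤ n' - 1) (by linarith : (0:ℝ) ≤ q₀ - 1),
    mul_pos (by linarith : (0:ℝ) < n') (by linarith : (0:ℝ) < q₀)]

lemma key (β γ ε : ℝ) (hβ : β ≠ 0) (hγ : γ ≠ 0) (hε : 0 < ε) :
    ∃ a b c d : ℤ, b ≠ 0 ∧ c ≠ 0 ∧ d ≠ 0 ∧ a * d - b * c = 1 ∧
      |(a : ℝ) / (b : ℝ) - γ| < ε ∧ |(c : ℝ) / (d : ℝ) - γ| < ε ∧
      |(a : ℝ) / (c : ℝ) - β| < ε ∧ |(b : ℝ) / (d : ℝ) - β| < ε := by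
  set B := |β| with hBdef
  set G := |γ| with hGdef
  have hB : 0 < B := abs_pos.mpr hβ
  have hG : 0 < G := abs_pos.mpr hγ
  set δ := min ε (min B G) with hδdef
  have hδ : 0 < δ := lt_min hε (lt_min hB hG)
  have hδε : δ ≤ ε := min_le_left _ _
  have hδB : δ ≤ B := le_trans (min_le_right _ _) (min_le_left _ _)
  have hδG : δ ≤ G := le_trans (min_le_right _ _) (min_le_right _ _)
  clear_value B G δ
  obtain ⟨T, hT⟩ := exists_int_gt (10/δ)
  have hT10 : 10 < δ * T := by rw [div_lt_iff₀ hδ] at hT; linarith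
  have hT0 : (0:ℝ) < (T:ℝ) := by
    by_contra h
    push_neg at h
    nlinarith [mul_nonneg hδ.le (neg_nonneg.mpr h)]
  have hT1 : (1:ℤ) ≤ T := by
    have : (0:ℤ) < T := by exact_mod_cast hT0
    linarith
  obtain ⟨p, q, hTq, hpq, hpe⟩ := exists_coprime_approx γ T
  obtain ⟨p₀, q₀, hdet1, hTq₀⟩ := exists_bezout_row p q T (le_trans hT1 hTq) hpq
  obtain ⟨m, n, hTn, hmn, hmf⟩ := exists_coprime_approx β T
  obtain ⟨m', n', hdet2, hTn'⟩ := exists_bezout_row m n T (le_trans hT1 hTn) hmn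
  have hq1 : (1:ℤ) ≤ q := le_trans hT1 hTq
  have hq₀1 : (1:ℤ) ≤ q₀ := le_trans hT1 hTq₀
  have hn1 : (1:ℤ) ≤ n := le_trans hT1 hTn
  have hn'1 : (1:ℤ) ≤ n' := le_trans hT1 hTn'
  have rq1 : (1:ℝ) ≤ (q:ℝ) := by exact_mod_cast hq1
  have rq₀1 : (1:ℝ) ≤ (q₀:ℝ) := by exact_mod_cast hq₀1
  have rn1 : (1:ℝ) ≤ (n:ℝ) := by exact_mod_cast hn1
  have rn'1 : (1:ℝ) ≤ (n':ℝ) := by exact_mod_cast hn'1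
  have rq0 : (0:ℝ) < (q:ℝ) := by linarith
  have rq₀0 : (0:ℝ) < (q₀:ℝ) := by linarith
  have rn0 : (0:ℝ) < (n:ℝ) := by linarith
  have rn'0 : (0:ℝ) < (n':ℝ) := by linarith
  have hδq : 10 < δ * q := by
    have h' : (T:ℝ) ≤ (q:ℝ) := by exact_mod_cast hTq
    have := mul_le_mul_of_nonneg_left h' hδ.le
    linarith
  have hδn : 10 < δ * n := by
    have h' : (T:ℝ) ≤ (n:ℝ) := by exact_mod_cast hTn
    have := mul_le_mul_of_nonneg_left h' hδ.le
    linarith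
  have hεq : 10 < ε * q := by
    have := mul_le_mul_of_nonneg_right hδε rq0.le
    linarith
  have hεn : 10 < ε * n := by
    have := mul_le_mul_of_nonneg_right hδε rn0.le
    linarith
  have hBn : 10 < B * n := by
    have := mul_le_mul_of_nonneg_right hδB rn0.le
    linarith
  have hGq : 10 < G * q := by
    have := mul_le_mul_of_nonneg_right hδG rq0.le
    linarith
  set e : ℝ := (p:ℝ) - γ * q with hedef
  set e₀ : ℝ := (p₀:ℝ) - γ * q₀ with he₀def
  set f : ℝ := (m:ℝ) - β * n with hfdef
  set f' : ℝ := (m':ℝ) - β * n' with hf'def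
  have he : |e| ≤ 2 := hpe
  have hf : |f| ≤ 2 := hmf
  have hdet1R : (p:ℝ) * q₀ - q * p₀ = 1 := by exact_mod_cast hdet1
  have hdet2R : (m:ℝ) * n' - n * m' = 1 := by exact_mod_cast hdet2
  have he₀ : |(q:ℝ) * e₀| ≤ 2 * q₀ + 1 := by
    have h : (q:ℝ) * e₀ = (q₀:ℝ) * e - 1 := by
      rw [he₀def, hedef]; linear_combination -hdet1R
    rw [h]
    calc |(q₀:ℝ) * e - 1| ≤ |(q₀:ℝ) * e| + |(-1:ℝ)| := by
          have := abs_add_le ((q₀:ℝ) * e) (-1); simpa [sub_eq_add_neg] using this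
      _ = (q₀:ℝ) * |e| + 1 := by rw [abs_mul, abs_of_pos rq₀0]; norm_num
      _ ≤ (q₀:ℝ) * 2 + 1 := by
          have := mul_le_mul_of_nonneg_left he rq₀0.le
          linarith
      _ = 2 * q₀ + 1 := by ring
  have hf' : |(n:ℝ) * f'| ≤ 2 * n' + 1 := by
    have h : (n:ℝ) * f' = (n':ℝ) * f - 1 := by
      rw [hf'def, hfdef]; linear_combination -hdet2R
    rw [h]
    calc |(n':ℝ) * f - 1| ≤ |(n':ℝ) * f| + |(-1:ℝ)| := by
          have := abs_add_le ((n':ℝ) * f) (-1); simpa [sub_eq_add_neg] using this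
      _ = (n':ℝ) * |f| + 1 := by rw [abs_mul, abs_of_pos rn'0]; norm_num
      _ ≤ 2 * n' + 1 := by
          have := mul_le_mul_of_nonneg_left hf rn'0.le
          linarith
  have hm_abs : |(m:ℝ)| ≤ B * n + 2 := by
    calc |(m:ℝ)| = |f + β * n| := by rw [hfdef]; ring_nf
      _ ≤ |f| + |β * n| := abs_add_le _ _
      _ = |f| + B * n := by rw [abs_mul, abs_of_pos rn0, hBdef]
      _ ≤ B * n + 2 := by linarith
  have hp_abs : |(p:ℝ)| ≤ G * q + 2 := by
    calc |(p:ℝ)| = |e + γ * q| := by rw [hedef]; ring_nf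
      _ ≤ |e| + |γ * q| := abs_add_le _ _
      _ = |e| + G * q := by rw [abs_mul, abs_of_pos rq0, hGdef]
      _ ≤ G * q + 2 := by linarith
  have hnm' : |(n:ℝ) * m'| ≤ (B * n + 2) * n' + 1 := by
    have h : (n:ℝ) * m' = (m:ℝ) * n' - 1 := by linear_combination -hdet2R
    rw [h]
    calc |(m:ℝ) * n' - 1| ≤ |(m:ℝ) * n'| + |(-1:ℝ)| := by
          have := abs_add_le ((m:ℝ) * n') (-1); simpa [sub_eq_add_neg] using this
      _ = |(m:ℝ)| * n' + 1 := by rw [abs_mul, abs_of_pos rn'0]; norm_num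
      _ ≤ (B * n + 2) * n' + 1 := by
          have := mul_le_mul_of_nonneg_right hm_abs rn'0.le
          linarith
  have hqp₀ : |(q:ℝ) * p₀| ≤ (G * q + 2) * q₀ + 1 := by
    have h : (q:ℝ) * p₀ = (p:ℝ) * q₀ - 1 := by linear_combination -hdet1R
    rw [h]
    calc |(p:ℝ) * q₀ - 1| ≤ |(p:ℝ) * q₀| + |(-1:ℝ)| := by
          have := abs_add_le ((p:ℝ) * q₀) (-1); simpa [sub_eq_add_neg] using this
      _ = |(p:ℝ)| * q₀ + 1 := by rw [abs_mul, abs_of_pos rq₀0]; norm_num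
      _ ≤ (G * q + 2) * q₀ + 1 := by
          have := mul_le_mul_of_nonneg_right hp_abs rq₀0.le
          linarith
  set D : ℝ := (n:ℝ) * q + (n':ℝ) * q₀ with hDdef
  set C : ℝ := (n:ℝ) * p + (n':ℝ) * p₀ with hCdef
  set A : ℝ := (m:ℝ) * p + (m':ℝ) * p₀ with hAdef
  set Bb : ℝ := (m:ℝ) * q + (m':ℝ) * q₀ with hBbdef
  clear_value e e₀ f f' D C A Bb
  have hD1 : (2:ℝ) ≤ D := by
    have t1 : (1:ℝ)*1 ≤ (n:ℝ)*q := mul_le_mul rn1 rq1 (by norm_num) (by linarith)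
    have t2 : (1:ℝ)*1 ≤ (n':ℝ)*q₀ := mul_le_mul rn'1 rq₀1 (by norm_num) (by linarith)
    rw [hDdef]; linarith
  have hD0 : (0:ℝ) < D := by linarith
  have hnq0 : (0:ℝ) < (n:ℝ) * q := mul_pos rn0 rq0
  -- estimate (1)
  have h1 : |C - γ * D| < (δ/2) * D := by
    have hmul : |C - γ * D| * q < ((δ/2) * D) * q := by
      have hexp : (C - γ * D) * q = ((n:ℝ) * q) * e + (n':ℝ) * ((q:ℝ) * e₀) := by
        rw [hCdef, hDdef, hedef, he₀def]; ring
      have habs : |C - γ * D| * q = |(C - γ * D) * q| := by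
        rw [abs_mul, abs_of_pos rq0]
      rw [habs, hexp]
      calc |((n:ℝ) * q) * e + (n':ℝ) * ((q:ℝ) * e₀)|
          ≤ |((n:ℝ) * q) * e| + |(n':ℝ) * ((q:ℝ) * e₀)| := abs_add_le _ _
        _ = ((n:ℝ) * q) * |e| + (n':ℝ) * |(q:ℝ) * e₀| := by
            rw [abs_mul, abs_mul ((n':ℝ)), abs_of_pos hnq0, abs_of_pos rn'0]
        _ ≤ ((n:ℝ) * q) * 2 + (n':ℝ) * (2 * q₀ + 1) := by
            have t1 := mul_le_mul_of_nonneg_left he hnq0.le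
            have t2 := mul_le_mul_of_nonneg_left he₀ rn'0.le
            linarith
        _ < ((δ/2) * D) * q := by
            rw [hDdef]
            exact est1 hδq rq₀1 rn1 rn'1 rq1
    exact lt_of_mul_lt_mul_right hmul rq0.le
  -- estimate (2)
  have h2 : |Bb - β * D| < (δ/2) * D := by
    have hmul : |Bb - β * D| * n < ((δ/2) * D) * n := by
      have hexp : (Bb - β * D) * n = ((n:ℝ) * q) * f + (q₀:ℝ) * ((n:ℝ) * f') := by
        rw [hBbdef, hDdef, hfdef, hf'def]; ring
      have habs : |Bb - β * D| * n = |(Bb - β * D) * n| := by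
        rw [abs_mul, abs_of_pos rn0]
      rw [habs, hexp]
      calc |((n:ℝ) * q) * f + (q₀:ℝ) * ((n:ℝ) * f')|
          ≤ |((n:ℝ) * q) * f| + |(q₀:ℝ) * ((n:ℝ) * f')| := abs_add_le _ _
        _ = ((n:ℝ) * q) * |f| + (q₀:ℝ) * |(n:ℝ) * f'| := by
            rw [abs_mul, abs_mul ((q₀:ℝ)), abs_of_pos hnq0, abs_of_pos rq₀0]
        _ ≤ ((n:ℝ) * q) * 2 + (q₀:ℝ) * (2 * n' + 1) := by
            have t1 := mul_le_mul_of_nonneg_left hf hnq0.le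
            have t2 := mul_le_mul_of_nonneg_left hf' rq₀0.le
            linarith
        _ < ((δ/2) * D) * n := by
            rw [hDdef]
            exact est2 hδn rq₀1 rn1 rn'1 rq1
    exact lt_of_mul_lt_mul_right hmul rn0.le
  -- lower bounds for |C|, |Bb|
  have hC_abs : (G/2) * D ≤ |C| := by
    have h := abs_sub_abs_le_abs_sub (γ * D) C
    rw [abs_sub_comm (γ*D) C] at h
    have hγD : |γ * D| = G * D := by rw [abs_mul, abs_of_pos hD0, hGdef]
    rw [hγD] at h
    linarith [h1, mul_nonneg (sub_nonneg.mpr hδG) hD0.le]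
  have hBb_abs : (B/2) * D ≤ |Bb| := by
    have h := abs_sub_abs_le_abs_sub (β * D) Bb
    rw [abs_sub_comm (β*D) Bb] at h
    have hβD : |β * D| = B * D := by rw [abs_mul, abs_of_pos hD0, hBdef]
    rw [hβD] at h
    linarith [h2, mul_nonneg (sub_nonneg.mpr hδB) hD0.le]
  have hC0 : C ≠ 0 := by
    intro h
    rw [h, abs_zero] at hC_abs
    linarith [mul_pos hG hD0]
  have hBb0 : Bb ≠ 0 := by
    intro h
    rw [h, abs_zero] at hBb_abs
    linarith [mul_pos hB hD0]
  -- estimate (3)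
  have h3 : |A - γ * Bb| < (ε * B / 2) * D := by
    have hmul : |A - γ * Bb| * ((n:ℝ) * q) < ((ε * B / 2) * D) * ((n:ℝ) * q) := by
      have hexp : (A - γ * Bb) * ((n:ℝ) * q) = ((m:ℝ) * e) * ((n:ℝ) * q) + ((n:ℝ) * m') * ((q:ℝ) * e₀) := by
        rw [hAdef, hBbdef, hedef, he₀def]; ring
      have habs : |A - γ * Bb| * ((n:ℝ)*q) = |(A - γ * Bb) * ((n:ℝ)*q)| := by
        rw [abs_mul, abs_of_pos hnq0]
      rw [habs, hexp]
      have step : |((m:ℝ) * e) * ((n:ℝ) * q) + ((n:ℝ) * m') * ((q:ℝ) * e₀)|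
          ≤ (B*n+2) * 2 * ((n:ℝ)*q) + ((B*n+2)*(n':ℝ)+1) * (2*q₀+1) := by
        have habs2 : |((m:ℝ) * e) * ((n:ℝ) * q) + ((n:ℝ) * m') * ((q:ℝ) * e₀)|
            ≤ |(m:ℝ) * e| * ((n:ℝ) * q) + |(n:ℝ) * m'| * |(q:ℝ) * e₀| := by
          have := abs_add_le (((m:ℝ) * e) * ((n:ℝ) * q)) (((n:ℝ) * m') * ((q:ℝ) * e₀))
          rw [abs_mul ((m:ℝ)*e) ((n:ℝ)*q), abs_mul ((n:ℝ)*m') ((q:ℝ)*e₀),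
            abs_of_pos hnq0] at this
          exact this
        have hme : |(m:ℝ) * e| ≤ (B*n+2)*2 := by
          rw [abs_mul]
          exact mul_le_mul hm_abs he (abs_nonneg _) (by linarith)
        have t1 := mul_le_mul_of_nonneg_right hme hnq0.le
        have t2 : |(n:ℝ)*m'| * |(q:ℝ)*e₀| ≤ ((B*n+2)*(n':ℝ)+1) * (2*q₀+1) := by
          have hr : (0:ℝ) ≤ (B*n+2)*(n':ℝ)+1 := by
            have := mul_nonneg (by linarith : (0:ℝ) ≤ B*n+2) rn'0.le
            linarith
          exact mul_le_mul hnm' he₀ (abs_nonneg _) hr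
        linarith
      refine lt_of_le_of_lt step ?_
      have S1 := est3S1 hεq hBn rn1 rq1
      have S2 := est3S2 (q₀ := (q₀:ℝ)) (n' := (n':ℝ)) hεq hBn rq₀1 rn1 rn'1 rq1
      have hsplit : ((ε * B / 2) * D) * ((n:ℝ) * q)
          = (ε * B / 2) * ((n:ℝ)*q) * ((n:ℝ)*q) + (ε * B / 2) * ((n':ℝ)*q₀) * ((n:ℝ)*q) := by
        rw [hDdef]; ring
      linarith
    exact lt_of_mul_lt_mul_right hmul hnq0.le
  -- estimate (4)
  have h4 : |A - β * C| < (ε * G / 2) * D := by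
    have hmul : |A - β * C| * ((n:ℝ) * q) < ((ε * G / 2) * D) * ((n:ℝ) * q) := by
      have hexp : (A - β * C) * ((n:ℝ) * q) = (f * (p:ℝ)) * ((n:ℝ) * q) + ((n:ℝ) * f') * ((q:ℝ) * p₀) := by
        rw [hAdef, hCdef, hfdef, hf'def]; ring
      have habs : |A - β * C| * ((n:ℝ)*q) = |(A - β * C) * ((n:ℝ)*q)| := by
        rw [abs_mul, abs_of_pos hnq0]
      rw [habs, hexp]
      have step : |(f * (p:ℝ)) * ((n:ℝ) * q) + ((n:ℝ) * f') * ((q:ℝ) * p₀)|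
          ≤ 2 * (G*q+2) * ((n:ℝ)*q) + (2*(n':ℝ)+1) * ((G*q+2)*(q₀:ℝ)+1) := by
        have habs2 : |(f * (p:ℝ)) * ((n:ℝ) * q) + ((n:ℝ) * f') * ((q:ℝ) * p₀)|
            ≤ |f * (p:ℝ)| * ((n:ℝ) * q) + |(n:ℝ) * f'| * |(q:ℝ) * p₀| := by
          have := abs_add_le ((f * (p:ℝ)) * ((n:ℝ) * q)) (((n:ℝ) * f') * ((q:ℝ) * p₀))
          rw [abs_mul (f * (p:ℝ)) ((n:ℝ)*q), abs_mul ((n:ℝ)*f') ((q:ℝ)*p₀),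
            abs_of_pos hnq0] at this
          exact this
        have hfp : |f * (p:ℝ)| ≤ 2*(G*q+2) := by
          rw [abs_mul]
          have := mul_le_mul hf hp_abs (abs_nonneg _) (by norm_num : (0:ℝ) ≤ 2)
          linarith
        have t1 := mul_le_mul_of_nonneg_right hfp hnq0.le
        have t2 : |(n:ℝ)*f'| * |(q:ℝ)*p₀| ≤ (2*(n':ℝ)+1) * ((G*q+2)*(q₀:ℝ)+1) := by
          have hr : (0:ℝ) ≤ 2*(n':ℝ)+1 := by linarith
          exact mul_le_mul hf' hqp₀ (abs_nonneg _) hr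
        linarith
      refine lt_of_le_of_lt step ?_
      have S1 := est4S1 hεn hGq rn1 rq1
      have S2 := est4S2 (q₀ := (q₀:ℝ)) (n' := (n':ℝ)) hεn hGq rq₀1 rn1 rn'1 rq1
      have hsplit : ((ε * G / 2) * D) * ((n:ℝ) * q)
          = (ε * G / 2) * ((n:ℝ)*q) * ((n:ℝ)*q) + (ε * G / 2) * ((n':ℝ)*q₀) * ((n:ℝ)*q) := by
        rw [hDdef]; ring
      linarith
    exact lt_of_mul_lt_mul_right hmul hnq0.le
  -- assemble
  have hcastA : ((m*p + m'*p₀ : ℤ):ℝ) = A := by rw [hAdef]; push_cast; ring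
  have hcastB : ((m*q + m'*q₀ : ℤ):ℝ) = Bb := by rw [hBbdef]; push_cast; ring
  have hcastC : ((n*p + n'*p₀ : ℤ):ℝ) = C := by rw [hCdef]; push_cast; ring
  have hcastD : ((n*q + n'*q₀ : ℤ):ℝ) = D := by rw [hDdef]; push_cast; ring
  have hDne : D ≠ 0 := ne_of_gt hD0
  have habsD : |D| = D := abs_of_pos hD0
  refine ⟨m*p + m'*p₀, m*q + m'*q₀, n*p + n'*p₀, n*q + n'*q₀, ?_, ?_, ?_, ?_, ?_, ?_, ?_, ?_⟩
  · intro h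
    exact hBb0 (by rw [← hcastB, h]; norm_num)
  · intro h
    exact hC0 (by rw [← hcastC, h]; norm_num)
  · intro h
    exact hDne (by rw [← hcastD, h]; norm_num)
  · linear_combination (p*q₀ - q*p₀) * hdet2 + hdet1
  · rw [hcastA, hcastB]
    refine div_err hBb0 ?_
    have : (ε * B / 2) * D ≤ ε * |Bb| := by
      have := mul_le_mul_of_nonneg_left hBb_abs hε.le
      calc (ε * B / 2) * D = ε * ((B/2) * D) := by ring
        _ ≤ ε * |Bb| := this
    linarith
  · rw [hcastC, hcastD]
    refine div_err hDne ?_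
    rw [habsD]
    linarith [h1, mul_pos hε hD0, mul_nonneg (sub_nonneg.mpr hδε) hD0.le]
  · rw [hcastA, hcastC]
    refine div_err hC0 ?_
    have : (ε * G / 2) * D ≤ ε * |C| := by
      have := mul_le_mul_of_nonneg_left hC_abs hε.le
      calc (ε * G / 2) * D = ε * ((G/2) * D) := by ring
        _ ≤ ε * |C| := this
    linarith
  · rw [hcastB, hcastD]
    refine div_err hDne ?_
    rw [habsD]
    linarith [h2, mul_pos hε hD0, mul_nonneg (sub_nonneg.mpr hδε) hD0.le]


/-- Elements of `SL₂(ℤ)` can be found whose row ratios approximate `γ`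
and whose column ratios approximate `β` to any prescribed accuracy. -/
theorem SL2_row_column_ratio_approx (β γ : ℝ) (ε : ℝ) (hε : 0 < ε) :
    ∃ a b c d : ℤ, b ≠ 0 ∧ c ≠ 0 ∧ d ≠ 0 ∧ a * d - b * c = 1 ∧
      |(a : ℝ) / (b : ℝ) - γ| < ε ∧ |(c : ℝ) / (d : ℝ) - γ| < ε ∧
      |(a : ℝ) / (c : ℝ) - β| < ε ∧ |(b : ℝ) / (d : ℝ) - β| < ε := by
  have h2 : 0 < ε/2 := by linarith
  have h4 : 0 < ε/4 := by linarith
  obtain ⟨β', hβ'0, hβ'⟩ : ∃ β', β' ≠ 0 ∧ |β' - β| < ε/2 := by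
    rcases eq_or_ne β 0 with h | h
    · exact ⟨ε/4, ne_of_gt h4, by rw [h, sub_zero, abs_of_pos h4]; linarith⟩
    · exact ⟨β, h, by simpa using h2⟩
  obtain ⟨γ', hγ'0, hγ'⟩ : ∃ γ', γ' ≠ 0 ∧ |γ' - γ| < ε/2 := by
    rcases eq_or_ne γ 0 with h | h
    · exact ⟨ε/4, ne_of_gt h4, by rw [h, sub_zero, abs_of_pos h4]; linarith⟩
    · exact ⟨γ, h, by simpa using h2⟩
  have tri : ∀ x t t' : ℝ, |x - t'| < ε/2 → |t' - t| < ε/2 → |x - t| < ε := by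
    intro x t t' ha hb
    calc |x - t| = |(x - t') + (t' - t)| := by congr 1; ring
      _ ≤ |x - t'| + |t' - t| := abs_add_le _ _
      _ < ε := by linarith
  obtain ⟨a, b, c, d, hb, hc, hd, hdet, g1, g2, g3, g4⟩ := key β' γ' (ε/2) hβ'0 hγ'0 h2
  exact ⟨a, b, c, d, hb, hc, hd, hdet, tri _ _ _ g1 hγ', tri _ _ _ g2 hγ',
    tri _ _ _ g3 hβ', tri _ _ _ g4 hβ'⟩
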